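/- arXiv:2308.02859 — 3 statements merged into one kernel-verified Lean document; each statement's English description precedes it below -/
import Mathlib

section
/- Let X be a circuit-cocircuit intersection of a finite matroid M with |X| = k ≥ 4. Then M has a minor N with ground set of size 2k−2 such that the rank of N equals k−1, the rank of the dual N* equals k−1, and X is both a circuit and a cocircuit of N. -/
open Set

namespace Matroid

variable {α : Type*}

/-- A circuit: a minimal dependent set. -/
def IsCircuit' (M : Matroid α) (C : Set α) : Prop :=
  C ⊆ M.E ∧ ¬ M.Indep C ∧ ∀ D, D ⊂ C → M.Indep D

/-- A cocircuit: a circuit of the dual matroid. -/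
def IsCocircuit' (M : Matroid α) (C : Set α) : Prop :=
  M✶.IsCircuit' C

/-- A circuit-cocircuit intersection (CCI). -/
def IsCCI (M : Matroid α) (X : Set α) : Prop :=
  ∃ C K, M.IsCircuit' C ∧ M.IsCocircuit' K ∧ X = C ∩ K

/-- A hyperplane: a maximal proper flat. -/
def IsHyperplane (M : Matroid α) (H : Set α) : Prop :=
  M.IsFlat H ∧ H ≠ M.E ∧ ∀ F, M.IsFlat F → H ⊂ F → F = M.E

/-- The rank of a set: the largest size of an independent subset. -/
noncomputable def rk (M : Matroid α) (A : Set α) : ℕ :=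
  sSup {n | ∃ I, I ⊆ A ∧ M.Indep I ∧ I.ncard = n}

/-- The rank of a matroid. -/
noncomputable def rank (M : Matroid α) : ℕ := M.rk M.E

/-- Deletion of a set from a matroid. -/
def del (M : Matroid α) (D : Set α) : Matroid α := M.restrict (M.E \ D)

/-- Contraction of a set in a matroid. -/
def con (M : Matroid α) (C : Set α) : Matroid α := (M✶.restrict (M.E \ C))✶

/-- `N` is a minor of `M` if it is obtained by a contraction followed by a deletion. -/
def IsMinor' (N M : Matroid α) : Prop := ∃ C D, N = (M.con C).del D

end Matroid

open Matroid

namespace Matroid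

variable {α : Type*} {M N P Q : Matroid α} {X C K T I J B D : Set α} {e : α}

/-! ### Basic facts about `del` and `con` -/

lemma del_ground (M : Matroid α) (D : Set α) : (M.del D).E = M.E \ D := rfl

lemma del_indep_iff : (M.del D).Indep I ↔ M.Indep I ∧ I ⊆ M.E \ D :=
  restrict_indep_iff

lemma con_ground (M : Matroid α) (C : Set α) : (M.con C).E = M.E \ C := rfl

lemma con_dual (M : Matroid α) (C : Set α) : (M.con C)✶ = M✶.del C := by
  rw [con, dual_dual]; rfl

lemma del_dual (M : Matroid α) (D : Set α) : (M.del D)✶ = M✶.con D := by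
  rw [con, dual_dual, dual_ground]; rfl

lemma del_del (M : Matroid α) (D D' : Set α) : (M.del D).del D' = M.del (D ∪ D') := by
  show ((M ↾ (M.E \ D)) ↾ ((M.E \ D) \ D')) = M ↾ (M.E \ (D ∪ D'))
  rw [restrict_restrict_eq _ diff_subset, diff_diff]

lemma con_con (M : Matroid α) (C C' : Set α) : (M.con C).con C' = M.con (C ∪ C') := by
  show (((M.con C))✶ ↾ ((M.con C).E \ C'))✶ = (M✶ ↾ (M.E \ (C ∪ C')))✶
  rw [con_dual, con_ground]
  show ((M✶ ↾ (M.E \ C)) ↾ ((M.E \ C) \ C'))✶ = _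
  rw [restrict_restrict_eq _ diff_subset, diff_diff]

lemma finite_of_subset_ground [M.Finite] (h : N.E ⊆ M.E) : N.Finite :=
  ⟨M.ground_finite.subset h⟩

lemma IsMinor'.ground_subset (h : N.IsMinor' M) : N.E ⊆ M.E := by
  obtain ⟨C, D, rfl⟩ := h
  rw [del_ground, con_ground]
  exact (diff_subset.trans diff_subset)

lemma IsMinor'.finite [M.Finite] (h : N.IsMinor' M) : N.Finite :=
  finite_of_subset_ground h.ground_subset

/-! ### Independence in contractions -/

lemma con_indep_iff (hT : T ⊆ M.E) :
    (M.con T).Indep I ↔ I ⊆ M.E \ T ∧ ∃ J, M.IsBasis J T ∧ M.Indep (I ∪ J) := by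
  have hF : M.E \ T ⊆ M✶.E := by rw [dual_ground]; exact diff_subset
  rw [con, dual_indep_iff_exists']
  simp only [restrict_ground_eq]
  refine and_congr_right fun hIF ↦ ?_
  constructor
  · rintro ⟨B', hBB', hdj⟩
    rw [isBase_restrict_iff hF] at hBB'
    obtain ⟨Bs, hBs, rfl⟩ := hBB'.exists_isBase
    have hBsE : Bs ⊆ M.E := hBs.subset_ground.trans dual_ground.subset
    have hBc : M.IsBase (M.E \ Bs) := hBs.compl_isBase_of_dual
    have hBT : M.IsBasis ((M.E \ Bs) ∩ T) T := by
      rw [hBc.inter_isBasis_iff_compl_inter_isBasis_dual hT, diff_diff_cancel_left hBsE]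
      exact hBB'
    refine ⟨(M.E \ Bs) ∩ T, hBT, hBc.indep.subset (union_subset ?_ inter_subset_left)⟩
    intro x hxI
    refine ⟨(hIF.trans diff_subset) hxI, fun hxB ↦ ?_⟩
    exact hdj.ne_of_mem hxI ⟨hxB, hIF hxI⟩ rfl
  · rintro ⟨J, hJ, hIJ⟩
    obtain ⟨B, hB, hIJB⟩ := hIJ.exists_isBase_superset
    have hJB : J = B ∩ T :=
      hJ.eq_of_subset_indep (hB.indep.subset inter_subset_left)
        (subset_inter ((subset_union_right).trans hIJB) hJ.subset) inter_subset_right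
    have hBT : M.IsBasis (B ∩ T) T := hJB ▸ hJ
    rw [hB.inter_isBasis_iff_compl_inter_isBasis_dual hT] at hBT
    refine ⟨(M.E \ B) ∩ (M.E \ T), ?_, ?_⟩
    · rwa [isBase_restrict_iff hF]
    · exact disjoint_left.2 fun x hxI hxB ↦ hxB.1.2 (hIJB (subset_union_left hxI))

lemma Indep.con_indep_iff (hT : M.Indep T) :
    (M.con T).Indep I ↔ I ⊆ M.E \ T ∧ M.Indep (I ∪ T) := by
  rw [Matroid.con_indep_iff hT.subset_ground]
  refine and_congr_right fun hIF ↦ ⟨?_, fun h ↦ ⟨T, hT.isBasis_self, h⟩⟩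
  rintro ⟨J, hJ, hIJ⟩
  rwa [hJ.eq_of_subset_indep hT hJ.subset Subset.rfl] at hIJ

/-! ### Commutation and minors -/

lemma del_basis_iff : (M.del D).IsBasis J C ↔ M.IsBasis J C ∧ C ⊆ M.E \ D :=
  isBasis_restrict_iff diff_subset

lemma del_con_comm (P : Matroid α) (hC : C ⊆ P.E \ B) : (P.del B).con C = (P.con C).del B := by
  have hCE : C ⊆ P.E := hC.trans diff_subset
  have hCQ : C ⊆ (P.del B).E := hC
  refine ext_indep
    (by rw [con_ground, del_ground, del_ground, con_ground, diff_diff_comm]) fun I hI ↦ ?_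
  simp only [Matroid.con_indep_iff hCQ, Matroid.con_indep_iff hCE, del_indep_iff, del_basis_iff,
    del_ground, con_ground]
  constructor
  · rintro ⟨hI1, J, ⟨hJ, -⟩, hIJ, -⟩
    have hI1' : I ⊆ (P.E \ C) \ B := diff_diff_comm ▸ hI1
    exact ⟨⟨hI1'.trans diff_subset, J, hJ, hIJ⟩, hI1'⟩
  · rintro ⟨⟨-, J, hJ, hIJ⟩, hI2⟩
    have hI2' : I ⊆ (P.E \ B) \ C := diff_diff_comm ▸ hI2
    exact ⟨hI2', J, ⟨hJ, hC⟩, hIJ,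
      union_subset (hI2'.trans diff_subset) (hJ.subset.trans hC)⟩

lemma IsMinor'.del_minor (h : N.IsMinor' M) (D : Set α) : (N.del D).IsMinor' M := by
  obtain ⟨C', D', rfl⟩ := h
  exact ⟨C', D' ∪ D, del_del _ _ _⟩

lemma IsMinor'.con_minor (h : N.IsMinor' M) (hC : C ⊆ N.E) : (N.con C).IsMinor' M := by
  obtain ⟨C', D', rfl⟩ := h
  rw [del_ground] at hC
  rw [del_con_comm _ hC, con_con]
  exact ⟨C' ∪ C, D', rfl⟩

/-! ### Circuits under deletion and contraction -/

lemma IsCircuit'.nonempty (h : M.IsCircuit' X) : X.Nonempty := by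
  rw [nonempty_iff_ne_empty]
  rintro rfl
  exact h.2.1 M.empty_indep

lemma IsCircuit'.del_circuit (h : M.IsCircuit' X) (hD : Disjoint X D) :
    (M.del D).IsCircuit' X := by
  refine ⟨subset_diff.2 ⟨h.1, hD⟩, fun hi ↦ h.2.1 (del_indep_iff.1 hi).1, fun D' hD' ↦ ?_⟩
  rw [del_indep_iff]
  exact ⟨h.2.2 D' hD', (subset_diff.2 ⟨h.1, hD⟩).trans' hD'.subset⟩

lemma IsCircuit'.con_diff_circuit (hC : M.IsCircuit' C) (hX : X ⊆ C) (hne : X.Nonempty) :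
    (M.con (C \ X)).IsCircuit' X := by
  obtain ⟨x, hx⟩ := hne
  have hT : M.Indep (C \ X) := hC.2.2 _ ⟨diff_subset, fun hss ↦ (hss (hX hx)).2 hx⟩
  have hXE : X ⊆ M.E \ (C \ X) := fun y hy ↦ ⟨hC.1 (hX hy), fun h' ↦ h'.2 hy⟩
  refine ⟨by rw [con_ground]; exact hXE, fun hi ↦ ?_, fun D' hD' ↦ ?_⟩
  · rw [hT.con_indep_iff, union_diff_cancel hX] at hi
    exact hC.2.1 hi.2
  · rw [hT.con_indep_iff]
    obtain ⟨y, hyX, hyD⟩ := exists_of_ssubset hD'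
    refine ⟨hD'.subset.trans hXE, hC.2.2 _ ⟨?_, fun hss ↦ ?_⟩⟩
    · exact union_subset (hD'.subset.trans hX) diff_subset
    · rcases hss (hX hyX) with h | h
      · exact hyD h
      · exact h.2 hyX

lemma IsCircuit'.con_elem_circuit (hX : M.IsCircuit' X) (he : e ∈ M.E)
    (heX : e ∉ M.closure X) : (M.con {e}).IsCircuit' X := by
  have heX' : e ∉ X := fun h ↦ heX (M.subset_closure X hX.1 h)
  have hT : M.Indep {e} := by
    have := M.empty_indep.insert_indep_iff_of_notMem (notMem_empty e)
    rw [show insert e ∅ = {e} by simp] at this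
    exact this.2 ⟨he, fun h ↦ heX (M.closure_subset_closure (empty_subset X) h)⟩
  refine ⟨by rw [con_ground]; exact subset_diff.2 ⟨hX.1, by simpa⟩, fun hi ↦ ?_,
    fun D' hD' ↦ ?_⟩
  · rw [hT.con_indep_iff] at hi
    exact hX.2.1 (hi.2.subset subset_union_left)
  · have hD'i : M.Indep D' := hX.2.2 D' hD'
    have heD' : e ∉ D' := fun h ↦ heX' (hD'.subset h)
    rw [hT.con_indep_iff, union_singleton]
    refine ⟨subset_diff.2 ⟨hD'.subset.trans hX.1, by simpa⟩, ?_⟩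
    rw [hD'i.insert_indep_iff_of_notMem heD']
    exact ⟨he, fun h ↦ heX (M.closure_subset_closure hD'.subset h)⟩

lemma IsCocircuit'.con_cocircuit (h : M.IsCocircuit' X) (hD : Disjoint X C) :
    (M.con C).IsCocircuit' X := by
  rw [IsCocircuit', con_dual]
  exact h.del_circuit hD

lemma IsCocircuit'.del_elem_cocircuit (hX : M.IsCocircuit' X) (he : e ∈ M.E)
    (heX : e ∉ M✶.closure X) : (M.del {e}).IsCocircuit' X := by
  rw [IsCocircuit', del_dual]
  exact hX.con_elem_circuit (by rwa [dual_ground]) heX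

lemma IsCircuit'.del_circuit' (h : M.IsCircuit' X) (he : e ∉ X) :
    (M.del {e}).IsCircuit' X :=
  h.del_circuit (by simpa)

/-! ### Rank -/

lemma rank_eq_ncard_base [M.Finite] (hB : M.IsBase B) : M.rank = B.ncard := by
  have hub : ∀ n ∈ {n | ∃ I, I ⊆ M.E ∧ M.Indep I ∧ I.ncard = n}, n ≤ B.ncard := by
    rintro n ⟨I, hIE, hI, rfl⟩
    obtain ⟨B', hB', hIB'⟩ := hI.exists_isBase_superset
    rw [← hB'.ncard_eq_ncard_of_isBase hB]
    exact ncard_le_ncard hIB' (M.set_finite B' hB'.subset_ground)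
  refine le_antisymm (csSup_le ⟨B.ncard, B, hB.subset_ground, hB.indep, rfl⟩ hub)
    (le_csSup ⟨B.ncard, hub⟩ ⟨B, hB.subset_ground, hB.indep, rfl⟩)

/-- If `X` is a circuit and everything lies in its closure, then `X` minus a point is a base. -/
lemma IsCircuit'.base_diff_singleton (hX : M.IsCircuit' X)
    (hsp : ∀ e ∈ M.E, e ∈ M.closure X) {x : α} (hx : x ∈ X) : M.IsBase (X \ {x}) := by
  have hI : M.Indep (X \ {x}) := hX.2.2 _ (sdiff_singleton_ssubset.2 hx)
  have hxcl : x ∈ M.closure (X \ {x}) := by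
    by_contra hxc
    rw [hI.notMem_closure_iff (hX.1 hx)] at hxc
    rw [insert_diff_singleton, insert_eq_of_mem hx] at hxc
    exact hX.2.1 hxc.1
  have hXcl : X ⊆ M.closure (X \ {x}) := by
    intro y hy
    rcases eq_or_ne y x with rfl | hne
    · exact hxcl
    · exact M.subset_closure _ (diff_subset.trans hX.1) ⟨hy, hne⟩
  have hEcl : M.E ⊆ M.closure (X \ {x}) := fun e he ↦
    closure_subset_closure_of_subset_closure hXcl (hsp e he)
  obtain ⟨B, hB, hIB⟩ := hI.exists_isBase_superset
  have : B = X \ {x} := by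
    refine subset_antisymm (fun b hb ↦ by_contra fun hbI ↦ ?_) hIB
    have hbi : M.Indep (insert b (X \ {x})) :=
      hB.indep.subset (insert_subset hb hIB)
    rw [hI.insert_indep_iff_of_notMem hbI] at hbi
    exact hbi.2 (hEcl (hB.subset_ground hb))
  rwa [this] at hB

lemma terminal_lemma [M.Finite] (hC : M.IsCircuit' X) (hK : M.IsCocircuit' X)
    (h1 : ∀ e ∈ M.E, e ∈ M.closure X) (h2 : ∀ e ∈ M.E, e ∈ M✶.closure X)
    (hk : 2 ≤ X.ncard) :
    M.E.ncard = 2 * X.ncard - 2 ∧ M.rank = X.ncard - 1 ∧ M✶.rank = X.ncard - 1 := by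
  have hfin := M.ground_finite
  have hXfin : X.Finite := hfin.subset hC.1
  obtain ⟨x, hx⟩ := hC.nonempty
  have hB1 : M.IsBase (X \ {x}) := hC.base_diff_singleton h1 hx
  have hB2 : M✶.IsBase (X \ {x}) := by
    refine IsCircuit'.base_diff_singleton hK (fun e he ↦ h2 e ?_) hx
    rwa [dual_ground] at he
  have hcard1 : (X \ {x}).ncard = X.ncard - 1 := ncard_diff_singleton_of_mem hx
  have hr1 : M.rank = X.ncard - 1 := by rw [rank_eq_ncard_base hB1, hcard1]
  have hr2 : M✶.rank = X.ncard - 1 := by rw [rank_eq_ncard_base hB2, hcard1]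
  refine ⟨?_, hr1, hr2⟩
  have hBc : M✶.IsBase (M.E \ (X \ {x})) := hB1.compl_isBase_dual
  have hcc : (M.E \ (X \ {x})).ncard = (X \ {x}).ncard := hBc.ncard_eq_ncard_of_isBase hB2
  have hxE : x ∈ M.E := hC.1 hx
  have hsplit : M.E \ (X \ {x}) = insert x (M.E \ X) := by
    ext y
    simp only [mem_diff, mem_insert_iff, mem_singleton_iff]
    constructor
    · rintro ⟨hy, h⟩
      by_cases hyX : y ∈ X
      · exact Or.inl (by_contra fun hne ↦ h ⟨hyX, hne⟩)
      · exact Or.inr ⟨hy, hyX⟩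
    · rintro (rfl | ⟨hy, hyX⟩)
      · exact ⟨hxE, fun h ↦ h.2 rfl⟩
      · exact ⟨hy, fun h ↦ hyX h.1⟩
  have hxnot : x ∉ M.E \ X := fun h ↦ h.2 hx
  have hins : (insert x (M.E \ X)).ncard = (M.E \ X).ncard + 1 :=
    ncard_insert_of_notMem hxnot (hfin.diff (t := X))
  have hEX : (M.E \ X).ncard + X.ncard = M.E.ncard :=
    ncard_diff_add_ncard_of_subset hC.1 hfin
  rw [hsplit, hins, hcard1] at hcc
  omega

/-! ### The shrinking induction -/

lemma shrink (M : Matroid α) [M.Finite] (X : Set α) (hk : 2 ≤ X.ncard) :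
    ∀ n (P : Matroid α), P.Finite → P.E.ncard ≤ n → P.IsMinor' M →
      P.IsCircuit' X → P.IsCocircuit' X →
      ∃ N : Matroid α, N.IsMinor' M ∧ N.E.ncard = 2 * X.ncard - 2 ∧
        N.rank = X.ncard - 1 ∧ N✶.rank = X.ncard - 1 ∧ N.IsCircuit' X ∧ N.IsCocircuit' X := by
  intro n
  induction n with
  | zero =>
    intro P hPfin hcard hmin hcirc hcocirc
    exfalso
    obtain ⟨x, hx⟩ := hcirc.nonempty
    have hne : P.E.Nonempty := ⟨x, hcirc.1 hx⟩
    have hfin : P.E.Finite := hPfin.ground_finite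
    have : 0 < P.E.ncard := (ncard_pos hfin).2 hne
    omega
  | succ n IH =>
    intro P hPfin hcard hmin hcirc hcocirc
    have hPE : P.E.Finite := hPfin.ground_finite
    have hXE : X ⊆ P.E := hcirc.1
    by_cases h1 : ∃ e ∈ P.E, e ∉ P.closure X
    · obtain ⟨e, he, hecl⟩ := h1
      have heX : e ∉ X := fun h ↦ hecl (P.subset_closure X hXE h)
      refine IH (P.con {e}) (finite_of_subset_ground ((P.con_ground {e}) ▸ diff_subset)) ?_
        (hmin.con_minor (by simpa using he)) (hcirc.con_elem_circuit he hecl)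
        (hcocirc.con_cocircuit (by simpa))
      rw [con_ground, ncard_diff_singleton_of_mem he]
      omega
    by_cases h2 : ∃ e ∈ P.E, e ∉ P✶.closure X
    · obtain ⟨e, he, hecl⟩ := h2
      have heX : e ∉ X := fun h ↦
        hecl (P✶.subset_closure X (by rwa [dual_ground]) h)
      refine IH (P.del {e}) (finite_of_subset_ground ((P.del_ground {e}) ▸ diff_subset)) ?_
        (hmin.del_minor {e}) (hcirc.del_circuit' heX)
        (hcocirc.del_elem_cocircuit he hecl)
      rw [del_ground, ncard_diff_singleton_of_mem he]
      omega
    push_neg at h1 h2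
    obtain ⟨hc1, hc2, hc3⟩ :=
      have : P.Finite := hPfin
      terminal_lemma hcirc hcocirc h1 h2 hk
    exact ⟨P, hmin, hc1, hc2, hc3, hcirc, hcocirc⟩

end Matroid

theorem stmt_3 {α : Type*} (M : Matroid α) [M.Finite] (X : Set α) (k : ℕ)
    (hX : M.IsCCI X) (hcard : X.ncard = k) (hk : 4 ≤ k) :
    ∃ N : Matroid α, N.IsMinor' M ∧ N.E.ncard = 2 * k - 2 ∧
      N.rank = k - 1 ∧ N✶.rank = k - 1 ∧ N.IsCircuit' X ∧ N.IsCocircuit' X := by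
  obtain ⟨C, K, hC, hK, rfl⟩ := hX
  set X := C ∩ K with hXdef
  have hXC : X ⊆ C := inter_subset_left
  have hXK : X ⊆ K := inter_subset_right
  have hne : X.Nonempty := by
    rw [nonempty_iff_ne_empty]
    rintro h
    rw [h, ncard_empty] at hcard
    omega
  set A := C \ X with hA
  set B := K \ X with hB
  have hN0 : ((M.con A).del B).IsMinor' M := ⟨A, B, rfl⟩
  have hcircN0 : ((M.con A).del B).IsCircuit' X :=
    (hC.con_diff_circuit hXC hne).del_circuit (disjoint_left.2 fun x hx h ↦ h.2 (⟨hXC hx, hXK hx⟩ : x ∈ X))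
  have hdual : ((M.con A).del B)✶ = (M✶.del A).con B := by
    rw [del_dual, con_dual]
  have hKA : Disjoint K A := disjoint_left.2 fun x hxK hxA ↦ hxA.2 ⟨hxA.1, hxK⟩
  have hcocircN0 : ((M.con A).del B).IsCocircuit' X := by
    rw [IsCocircuit', hdual]
    exact (hK.del_circuit hKA).con_diff_circuit hXK hne
  have hfin : ((M.con A).del B).Finite := hN0.finite
  subst hcard
  obtain ⟨N, h⟩ := M.shrink X (by omega) ((M.con A).del B).E.ncard ((M.con A).del B)
    hfin le_rfl hN0 hcircN0 hcocircN0
  exact ⟨N, h⟩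
end

section
/- Let N be a CCI-envelope of a CCI X of size k ≥ 4, and let (J; X₁, X₂) and (J'; X₁', X₂') be two hyperplane-partitions of X with J ≠ J'. Then {X₁, X₂} ≠ {X₁', X₂'} as partitions of X. -/
open Set

open Matroid

section Aux

variable {α : Type*} {M : Matroid α} {A B H I U : Set α}

lemma aux_bdd (hfin : M.E.Finite) (A : Set α) :
    BddAbove {n | ∃ I, I ⊆ A ∧ M.Indep I ∧ I.ncard = n} := by
  refine ⟨M.E.ncard, ?_⟩
  rintro n ⟨I, -, hi, rfl⟩
  exact Set.ncard_le_ncard hi.subset_ground hfin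

lemma aux_le_rk (hfin : M.E.Finite) (hIA : I ⊆ A) (hI : M.Indep I) :
    I.ncard ≤ M.rk A :=
  le_csSup (aux_bdd hfin A) ⟨I, hIA, hI, rfl⟩

lemma aux_rk_basis' (hfin : M.E.Finite) (hI : M.IsBasis' I A) : M.rk A = I.ncard := by
  have hne : I.ncard ∈ {n | ∃ I', I' ⊆ A ∧ M.Indep I' ∧ I'.ncard = n} :=
    ⟨I, hI.subset, hI.indep, rfl⟩
  refine le_antisymm (csSup_le ⟨_, hne⟩ ?_) (le_csSup (aux_bdd hfin A) hne)
  rintro n ⟨I', hI'A, hI'i, rfl⟩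
  obtain ⟨K, hK, hI'K⟩ := hI'i.subset_isBasis'_of_subset hI'A
  have hKI : K.encard = I.encard := hK.encard_eq_encard hI
  have h1 : I'.ncard ≤ K.ncard :=
    Set.ncard_le_ncard hI'K (hfin.subset hK.indep.subset_ground)
  have h2 : K.ncard = I.ncard := by
    rw [Set.ncard_def, hKI, ← Set.ncard_def]
  omega

lemma aux_rk_basis (hfin : M.E.Finite) (hI : M.IsBasis I A) : M.rk A = I.ncard :=
  aux_rk_basis' hfin hI.isBasis'

lemma aux_rank_base (hfin : M.E.Finite) {B : Set α} (hB : M.IsBase B) :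
    M.rank = B.ncard :=
  aux_rk_basis hfin hB.isBasis_ground

lemma aux_base_of_indep_ncard (hfin : M.E.Finite) (hI : M.Indep I)
    (h : I.ncard = M.rank) : M.IsBase I := by
  obtain ⟨B, hB, hIB⟩ := hI.exists_isBase_superset
  have hle : B.ncard ≤ I.ncard := by
    rw [h, aux_rank_base hfin hB]
  have : I = B := Set.eq_of_subset_of_ncard_le hIB hle (hfin.subset hB.indep.subset_ground)
  exact this ▸ hB

lemma aux_flat_closure (M : Matroid α) (X : Set α) : M.IsFlat (M.closure X) := by
  rw [isFlat_iff_isClosed]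
  refine ⟨M.closure_subset_ground X, ?_⟩
  have h := M.closure_eq_subtypeClosure X
  have h2 : (⟨M.closure X, M.closure_subset_ground X⟩ : Set.Iic M.E) =
      M.subtypeClosure ⟨X ∩ M.E, Set.inter_subset_right⟩ := Subtype.ext h
  rw [h2]
  exact M.subtypeClosure.isClosed_closure _

lemma aux_rk_spanning (hfin : M.E.Finite) (hU : U ⊆ M.E) (h : M.closure U = M.E) :
    M.rk U = M.rank := by
  obtain ⟨I, hI⟩ := M.exists_isBasis U hU
  have hbase : M.IsBase I :=
    isBase_iff_indep_closure_eq.mpr ⟨hI.indep, hI.closure_eq_closure.trans h⟩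
  rw [aux_rk_basis hfin hI, aux_rank_base hfin hbase]

lemma aux_hyperplane_rk (hfin : M.E.Finite) (hH : M.IsHyperplane H) :
    M.rk H + 1 = M.rank := by
  have hHE : H ⊆ M.E := hH.1.subset_ground
  obtain ⟨I, hI⟩ := M.exists_isBasis H hHE
  have hclI : M.closure I = H := hI.closure_eq_closure.trans hH.1.closure
  obtain ⟨f, hfE, hfH⟩ := Set.exists_of_ssubset (hHE.ssubset_of_ne hH.2.1)
  have hfI : f ∉ I := fun hmem => hfH (hI.subset hmem)
  have hins : M.Indep (insert f I) := by
    rw [hI.indep.insert_indep_iff_of_notMem hfI]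
    exact ⟨hfE, by rwa [hclI]⟩
  have hclins : M.closure (insert f I) = M.E := by
    refine hH.2.2 _ (aux_flat_closure M _) ⟨?_, fun hcon => hfH ?_⟩
    · rw [← hclI]
      exact (M.closure_subset_closure (Set.subset_insert f I))
    · exact hcon (M.subset_closure _ hins.subset_ground (Set.mem_insert f I))
  have hbase : M.IsBase (insert f I) := isBase_iff_indep_closure_eq.mpr ⟨hins, hclins⟩
  rw [aux_rk_basis hfin hI, aux_rank_base hfin hbase,
    Set.ncard_insert_of_notMem hfI (hfin.subset hI.indep.subset_ground)]

lemma aux_submod (hfin : M.E.Finite) (hA : A ⊆ M.E) (hB : B ⊆ M.E) :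
    M.rk (A ∪ B) + M.rk (A ∩ B) ≤ M.rk A + M.rk B := by
  obtain ⟨I, hI⟩ := M.exists_isBasis (A ∩ B) (Set.inter_subset_left.trans hA)
  obtain ⟨K, hK, hIK⟩ := hI.indep.subset_isBasis_of_subset
    (hI.subset.trans (Set.inter_subset_left.trans Set.subset_union_left))
    (Set.union_subset hA hB)
  have hKfin : K.Finite := hfin.subset hK.indep.subset_ground
  rw [aux_rk_basis hfin hK, aux_rk_basis hfin hI]
  have h1 : (K ∩ A).ncard ≤ M.rk A :=
    aux_le_rk hfin Set.inter_subset_right (hK.indep.subset Set.inter_subset_left)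
  have h2 : (K ∩ B).ncard ≤ M.rk B :=
    aux_le_rk hfin Set.inter_subset_right (hK.indep.subset Set.inter_subset_left)
  have hu : (K ∩ A) ∪ (K ∩ B) = K := by
    rw [← Set.inter_union_distrib_left, Set.inter_eq_left.2 hK.subset]
  have hi : (K ∩ A) ∩ (K ∩ B) = K ∩ (A ∩ B) := by
    ext a; simp only [Set.mem_inter_iff]; tauto
  have hcard := Set.ncard_union_add_ncard_inter (K ∩ A) (K ∩ B)
    (hKfin.subset Set.inter_subset_left) (hKfin.subset Set.inter_subset_left)
  rw [hu, hi] at hcard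
  have hIle : I.ncard ≤ (K ∩ (A ∩ B)).ncard :=
    Set.ncard_le_ncard (Set.subset_inter hIK hI.subset)
      (hKfin.subset Set.inter_subset_left)
  omega

end Aux

lemma aux_key {α : Type*} (N : Matroid α) (k : ℕ) (hk : 4 ≤ k)
    (hE : N.E.ncard = 2 * k - 2) (hr : N.rank = k - 1) (hr' : N✶.rank = k - 1)
    (X : Set α) (hXcard : X.ncard = k)
    (hXc : N.IsCircuit' X) (hXcc : N.IsCocircuit' X)
    (J X₁ X₂ : Set α) (hJ : J ⊆ N.E \ X) (hJcard : J.ncard = k - 3)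
    (hX₁₂ : X₁ ∪ X₂ = X) (hdisj : Disjoint X₁ X₂)
    (J' : Set α) (hJ' : J' ⊆ N.E \ X) (hJ'card : J'.ncard = k - 3)
    (hH₁ : N.IsHyperplane (J ∪ X₁)) (hH₂ : N.IsHyperplane (J ∪ X₂))
    (hH₁' : N.IsHyperplane (J' ∪ X₁)) (hH₂' : N.IsHyperplane (J' ∪ X₂))
    (hJJ' : J ≠ J') : False := by
  have hfin : N.E.Finite := by
    by_contra h
    rw [Set.Infinite.ncard h] at hE
    omega
  have hXE : X ⊆ N.E := hXc.1
  have hXfin : X.Finite := hfin.subset hXE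
  have hYfin : (N.E \ X).Finite := hfin.diff
  have hYcard : (N.E \ X).ncard = k - 2 := by
    rw [Set.ncard_diff hXE hXfin, hE, hXcard]
    omega
  have hXne : X.Nonempty := by
    rw [Set.nonempty_iff_ne_empty]
    intro h
    rw [h, Set.ncard_empty] at hXcard
    omega
  obtain ⟨e, he⟩ := hXne
  have hssub : X \ {e} ⊂ X := Set.sdiff_singleton_ssubset.2 he
  have hXe_i : N.Indep (X \ {e}) := hXc.2.2 _ hssub
  have hXe_card : (X \ {e}).ncard = k - 1 := by
    rw [Set.ncard_diff_singleton_of_mem he, hXcard]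
  -- Y := N.E \ X is independent
  have hXe_i' : N✶.Indep (X \ {e}) := hXcc.2.2 _ hssub
  have hB' : N✶.IsBase (X \ {e}) := by
    refine aux_base_of_indep_ncard ?_ hXe_i' (by rw [hXe_card, hr'])
    rwa [dual_ground]
  have hYindep : N.Indep (N.E \ X) := by
    have hbase : N.IsBase (N.E \ (X \ {e})) :=
      (dual_isBase_iff (Set.diff_subset.trans hXE)).mp hB'
    exact hbase.indep.subset (Set.diff_subset_diff_right Set.diff_subset)
  -- the intersection A := J ∩ J'
  have hJfin : J.Finite := hYfin.subset hJ
  have hJ'fin : J'.Finite := hYfin.subset hJ'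
  have hAcard : k - 4 ≤ (J ∩ J').ncard := by
    have h1 := Set.ncard_union_add_ncard_inter J J' hJfin hJ'fin
    have h2 : (J ∪ J').ncard ≤ k - 2 := by
      rw [← hYcard]
      exact Set.ncard_le_ncard (Set.union_subset hJ hJ') hYfin
    omega
  have hAindep : N.Indep (J ∩ J') :=
    hYindep.subset ((Set.inter_subset_left).trans hJ)
  have hrkA : N.rk (J ∩ J') = (J ∩ J').ncard :=
    aux_rk_basis' hfin hAindep.isBasis_self.isBasis'
  -- an element of J' \ J
  have hne : (J' \ J).Nonempty := by
    rw [Set.nonempty_iff_ne_empty, Ne, Set.diff_eq_empty]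
    intro hsub
    exact hJJ' (Set.eq_of_subset_of_ncard_le hsub (by omega) hJfin).symm
  obtain ⟨y, hyJ', hyJ⟩ := hne
  have hJE : J ⊆ N.E := hJ.trans Set.diff_subset
  have hJ'E : J' ⊆ N.E := hJ'.trans Set.diff_subset
  -- key inequality for Z = X₁ and Z = X₂
  have key : ∀ Z ⊆ X, N.IsHyperplane (J ∪ Z) → N.IsHyperplane (J' ∪ Z) →
      N.rk ((J ∩ J') ∪ Z) + 3 ≤ k := by
    intro Z hZX hh hh'
    have hZE : Z ⊆ N.E := hZX.trans hXE
    have hUE : (J ∪ Z) ∪ (J' ∪ Z) ⊆ N.E :=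
      Set.union_subset (Set.union_subset hJE hZE) (Set.union_subset hJ'E hZE)
    have hyU : y ∈ (J ∪ Z) ∪ (J' ∪ Z) := Or.inr (Or.inl hyJ')
    have hynH : y ∉ J ∪ Z := by
      rintro (h | h)
      · exact hyJ h
      · exact (hJ' hyJ').2 (hZX h)
    have hclE : N.closure ((J ∪ Z) ∪ (J' ∪ Z)) = N.E := by
      refine hh.2.2 _ (aux_flat_closure N _) ⟨?_, fun hcon => hynH ?_⟩
      · exact (Set.subset_union_left).trans (N.subset_closure _ hUE)
      · exact hcon (N.subset_closure _ hUE hyU)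
    have hrkU : N.rk ((J ∪ Z) ∪ (J' ∪ Z)) = k - 1 := by
      rw [aux_rk_spanning hfin hUE hclE, hr]
    have hsub := aux_submod hfin (Set.union_subset hJE hZE) (Set.union_subset hJ'E hZE)
    have hint : (J ∪ Z) ∩ (J' ∪ Z) = (J ∩ J') ∪ Z := by
      ext a
      simp only [Set.mem_inter_iff, Set.mem_union]
      tauto
    rw [hint, hrkU] at hsub
    have e1 := aux_hyperplane_rk hfin hh
    have e2 := aux_hyperplane_rk hfin hh'
    rw [hr] at e1 e2
    omega
  have k1 := key X₁ (hX₁₂ ▸ Set.subset_union_left) hH₁ hH₁'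
  have k2 := key X₂ (hX₁₂ ▸ Set.subset_union_right) hH₂ hH₂'
  -- final submodularity
  have hX₁E : X₁ ⊆ N.E := (hX₁₂ ▸ Set.subset_union_left).trans hXE
  have hX₂E : X₂ ⊆ N.E := (hX₁₂ ▸ Set.subset_union_right).trans hXE
  have hAE : J ∩ J' ⊆ N.E := (Set.inter_subset_left).trans hJE
  have hsub2 := aux_submod hfin (Set.union_subset hAE hX₁E) (Set.union_subset hAE hX₂E)
  have hU2 : ((J ∩ J') ∪ X₁) ∪ ((J ∩ J') ∪ X₂) = (J ∩ J') ∪ X := by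
    rw [← hX₁₂]
    ext a
    simp only [Set.mem_union]
    tauto
  have hI2 : ((J ∩ J') ∪ X₁) ∩ ((J ∩ J') ∪ X₂) = J ∩ J' := by
    ext a
    simp only [Set.mem_inter_iff, Set.mem_union]
    have hd : a ∈ X₁ → a ∉ X₂ := fun h => Set.disjoint_left.mp hdisj h
    tauto
  rw [hU2, hI2] at hsub2
  have hlow : k - 1 ≤ N.rk ((J ∩ J') ∪ X) :=
    hXe_card ▸ aux_le_rk hfin ((Set.diff_subset).trans Set.subset_union_right) hXe_i
  omega

theorem stmt_7 {α : Type*} (N : Matroid α) (k : ℕ) (hk : 4 ≤ k)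
    (hE : N.E.ncard = 2 * k - 2) (hr : N.rank = k - 1) (hr' : N✶.rank = k - 1)
    (X : Set α) (hXcard : X.ncard = k)
    (hXc : N.IsCircuit' X) (hXcc : N.IsCocircuit' X)
    (J X₁ X₂ : Set α) (hJ : J ⊆ N.E \ X) (hJcard : J.ncard = k - 3)
    (hX₁₂ : X₁ ∪ X₂ = X) (hdisj : Disjoint X₁ X₂)
    (hX₁ne : X₁.Nonempty) (hX₂ne : X₂.Nonempty)
    (hH₁ : N.IsHyperplane (J ∪ X₁)) (hH₂ : N.IsHyperplane (J ∪ X₂))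
    (J' X₁' X₂' : Set α) (hJ' : J' ⊆ N.E \ X) (hJ'card : J'.ncard = k - 3)
    (hX₁₂' : X₁' ∪ X₂' = X) (hdisj' : Disjoint X₁' X₂')
    (hX₁'ne : X₁'.Nonempty) (hX₂'ne : X₂'.Nonempty)
    (hH₁' : N.IsHyperplane (J' ∪ X₁')) (hH₂' : N.IsHyperplane (J' ∪ X₂'))
    (hJJ' : J ≠ J') :
    ¬ ((X₁ = X₁' ∧ X₂ = X₂') ∨ (X₁ = X₂' ∧ X₂ = X₁')) := by
  rintro (⟨h1, h2⟩ | ⟨h1, h2⟩)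
  · subst h1; subst h2
    exact aux_key N k hk hE hr hr' X hXcard hXc hXcc J X₁ X₂ hJ hJcard hX₁₂ hdisj
      J' hJ' hJ'card hH₁ hH₂ hH₁' hH₂' hJJ'
  · subst h1; subst h2
    exact aux_key N k hk hE hr hr' X hXcard hXc hXcc J X₁ X₂ hJ hJcard hX₁₂ hdisj
      J' hJ' hJ'card hH₁ hH₂ hH₂' hH₁' hJJ'
end

section
/- Let N be a CCI-envelope of a CCI X of size 7, and suppose (J₁; {x₀}, X₁, X₁') and (J₂; {x₀}, X₂, X₂') are hyperplane-partitions of type (1,3,3) with J₁ ≠ J₂ sharing the same singleton {x₀}. Then these two partitions of X differ, and after relabeling so that |X₁ ∩ X₂| = 2 and |X₁ ∩ X₂'| = 1, either (J₁ ∩ J₂) ∪ (X₁ △ X₂) or (J₁ ∩ J₂) ∪ (X₁ △ X₂) ∪ {x₀} is a hyperplane of N, where △ is symmetric difference. -/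
open Set

open Matroid

namespace Matroid

variable {α : Type*}

lemma aux_flat_closure (M : Matroid α) (X : Set α) : M.IsFlat (M.closure X) := by
  have hne : ({F | M.IsFlat F ∧ X ∩ M.E ⊆ F}).Nonempty :=
    ⟨M.E, M.ground_isFlat, inter_subset_right⟩
  rw [closure_def, sInter_eq_iInter]
  have : Nonempty {F // F ∈ {F | M.IsFlat F ∧ X ∩ M.E ⊆ F}} := hne.to_subtype
  exact IsFlat.iInter fun F => F.2.1

lemma aux_ncard_le_rank {M : Matroid α} (hfin : M.E.Finite) {I : Set α} (hI : M.Indep I) :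
    I.ncard ≤ M.rank := by
  simp only [rank, rk]
  apply le_csSup
  · exact ⟨M.E.ncard, by rintro n ⟨J, hJE, -, rfl⟩; exact Set.ncard_le_ncard hJE hfin⟩
  · exact ⟨I, hI.subset_ground, hI, rfl⟩

lemma aux_base_of_ncard {M : Matroid α} (hfin : M.E.Finite) {I : Set α} (hI : M.Indep I)
    (hcard : I.ncard = M.rank) : M.IsBase I := by
  refine hI.isBase_of_maximal fun J hJ hIJ => ?_
  exact Set.eq_of_subset_of_ncard_le hIJ
    (by rw [hcard]; exact aux_ncard_le_rank hfin hJ) (hfin.subset hJ.subset_ground)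

lemma IsCircuit'.diff_indep {M : Matroid α} {C : Set α} (hC : M.IsCircuit' C) {e : α}
    (he : e ∈ C) : M.Indep (C \ {e}) :=
  hC.2.2 _ (Set.sdiff_singleton_ssubset.mpr he)

lemma IsHyperplane.closure_insert_eq {M : Matroid α} {H : Set α} (hH : M.IsHyperplane H) {z : α}
    (hzE : z ∈ M.E) (hzH : z ∉ H) : M.closure (insert z H) = M.E := by
  refine hH.2.2 _ (aux_flat_closure M _) (HasSubset.Subset.ssubset_of_ne ?_ ?_)
  · exact (subset_insert _ _).trans (M.subset_closure _ (insert_subset hzE hH.1.subset_ground))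
  · intro heq
    have hx : z ∈ M.closure (insert z H) := M.mem_closure_of_mem' (mem_insert _ _) hzE
    rw [← heq] at hx
    exact hzH hx

lemma IsHyperplane.compl_dep {M : Matroid α} {H : Set α} (hH : M.IsHyperplane H) :
    ¬ M✶.Indep (M.E \ H) := by
  intro h
  have hsp := (Matroid.coindep_def.mpr h).compl_spanning
  rw [diff_diff_cancel_left hH.1.subset_ground] at hsp
  exact hH.2.1 (by rw [← hH.1.closure, hsp.closure_eq])

lemma IsHyperplane.dual_indep {M : Matroid α} {H : Set α} (hH : M.IsHyperplane H) {z : α}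
    (hz : z ∈ M.E \ H) : M✶.Indep ((M.E \ H) \ {z}) := by
  have hset : M.E \ ((M.E \ H) \ {z}) = insert z H := by
    ext w
    constructor
    · rintro ⟨hwE, hw⟩
      by_cases hwz : w = z
      · exact Or.inl hwz
      · right
        by_contra hwH
        exact hw ⟨⟨hwE, hwH⟩, hwz⟩
    · rintro (rfl | hwH)
      · exact ⟨hz.1, fun hmem => hmem.2 rfl⟩
      · exact ⟨hH.1.subset_ground hwH, fun hmem => hmem.1.2 hwH⟩
  have hsp : M.Spanning (M.E \ ((M.E \ H) \ {z})) := by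
    rw [hset]
    exact ⟨hH.closure_insert_eq hz.1 hz.2, insert_subset hz.1 hH.1.subset_ground⟩
  exact ((Matroid.coindep_iff_compl_spanning
    (Set.diff_subset.trans Set.diff_subset)).mpr hsp).indep

lemma IsHyperplane.mem_dual_closure {M : Matroid α} {H : Set α} (hH : M.IsHyperplane H) {z : α}
    (hz : z ∈ M.E \ H) : z ∈ M✶.closure ((M.E \ H) \ {z}) := by
  by_contra hcl
  have h := ((hH.dual_indep hz).insert_indep_iff_of_notMem (by simp)).mpr
    ⟨(by simpa using hz.1 : z ∈ M✶.E), hcl⟩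
  rw [Set.insert_diff_singleton, Set.insert_eq_of_mem hz] at h
  exact hH.compl_dep h

lemma IsCircuit'.mem_closure_diff {M : Matroid α} {C : Set α} (hC : M.IsCircuit' C) {e : α}
    (he : e ∈ C) : e ∈ M.closure (C \ {e}) := by
  by_contra hcl
  have h := ((hC.diff_indep he).insert_indep_iff_of_notMem (by simp)).mpr ⟨hC.1 he, hcl⟩
  rw [Set.insert_diff_singleton, Set.insert_eq_of_mem he] at h
  exact hC.2.1 h

end Matroid

theorem stmt_19 {α : Type*} (N : Matroid α)
    (hE : N.E.ncard = 12) (hr : N.rank = 6) (hr' : N✶.rank = 6)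
    (X : Set α) (hXcard : X.ncard = 7)
    (hXc : N.IsCircuit' X) (hXcc : N.IsCocircuit' X)
    (x₀ : α) (hx₀ : x₀ ∈ X)
    -- the type-(1,3,3) hyperplane-partition (J₁; {x₀}, X₁, X₁')
    (J₁ X₁ X₁' : Set α) (hJ₁ : J₁ ⊆ N.E \ X) (hJ₁card : J₁.ncard = 4)
    (hpart₁ : {x₀} ∪ X₁ ∪ X₁' = X)
    (hd₁ : Disjoint ({x₀} : Set α) X₁ ∧ Disjoint ({x₀} : Set α) X₁' ∧ Disjoint X₁ X₁')
    (hc₁ : X₁.ncard = 3 ∧ X₁'.ncard = 3)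
    (hH₁ : N.IsHyperplane (J₁ ∪ {x₀}) ∧ N.IsHyperplane (J₁ ∪ X₁) ∧
      N.IsHyperplane (J₁ ∪ X₁'))
    -- the type-(1,3,3) hyperplane-partition (J₂; {x₀}, X₂, X₂')
    (J₂ X₂ X₂' : Set α) (hJ₂ : J₂ ⊆ N.E \ X) (hJ₂card : J₂.ncard = 4)
    (hpart₂ : {x₀} ∪ X₂ ∪ X₂' = X)
    (hd₂ : Disjoint ({x₀} : Set α) X₂ ∧ Disjoint ({x₀} : Set α) X₂' ∧ Disjoint X₂ X₂')
    (hc₂ : X₂.ncard = 3 ∧ X₂'.ncard = 3)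
    (hH₂ : N.IsHyperplane (J₂ ∪ {x₀}) ∧ N.IsHyperplane (J₂ ∪ X₂) ∧
      N.IsHyperplane (J₂ ∪ X₂'))
    (hJne : J₁ ≠ J₂) :
    (¬ ((X₁ = X₂ ∧ X₁' = X₂') ∨ (X₁ = X₂' ∧ X₁' = X₂))) ∧
    ((X₁ ∩ X₂).ncard = 2 ∧ (X₁ ∩ X₂').ncard = 1 →
      N.IsHyperplane ((J₁ ∩ J₂) ∪ ((X₁ \ X₂) ∪ (X₂ \ X₁))) ∨
      N.IsHyperplane ((J₁ ∩ J₂) ∪ ((X₁ \ X₂) ∪ (X₂ \ X₁)) ∪ {x₀})) := by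
  classical
  obtain ⟨hH₁a, hH₁b, hH₁c⟩ := hH₁
  obtain ⟨hH₂a, hH₂b, hH₂c⟩ := hH₂
  obtain ⟨hd₁a, hd₁b, hd₁c⟩ := hd₁
  obtain ⟨hd₂a, hd₂b, hd₂c⟩ := hd₂
  have hEfin : N.E.Finite := by
    by_contra hinf
    have h0 := Set.Infinite.ncard hinf
    rw [hE] at h0
    exact absurd h0 (by norm_num)
  have hXE : X ⊆ N.E := hXc.1
  have hXfin : X.Finite := hEfin.subset hXE
  have hx₀E : x₀ ∈ N.E := hXE hx₀
  -- partition memberships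
  have hX₁X : X₁ ⊆ X := by rw [← hpart₁]; exact subset_union_right.trans subset_union_left
  have hX₁'X : X₁' ⊆ X := by rw [← hpart₁]; exact subset_union_right
  have hX₂X : X₂ ⊆ X := by rw [← hpart₂]; exact subset_union_right.trans subset_union_left
  have hX₂'X : X₂' ⊆ X := by rw [← hpart₂]; exact subset_union_right
  have hx₀X₁ : x₀ ∉ X₁ := Set.disjoint_singleton_left.mp hd₁a
  have hx₀X₁' : x₀ ∉ X₁' := Set.disjoint_singleton_left.mp hd₁b
  have hx₀X₂ : x₀ ∉ X₂ := Set.disjoint_singleton_left.mp hd₂a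
  have hx₀X₂' : x₀ ∉ X₂' := Set.disjoint_singleton_left.mp hd₂b
  have hd11 : ∀ w ∈ X₁, w ∉ X₁' := fun w hw => Set.disjoint_left.mp hd₁c hw
  have hd22 : ∀ w ∈ X₂, w ∉ X₂' := fun w hw => Set.disjoint_left.mp hd₂c hw
  have hXsplit₁ : ∀ w ∈ X, w = x₀ ∨ w ∈ X₁ ∨ w ∈ X₁' := by
    intro w hw
    rw [← hpart₁] at hw
    rcases hw with (h | h) | h
    · exact Or.inl h
    · exact Or.inr (Or.inl h)
    · exact Or.inr (Or.inr h)
  have hXsplit₂ : ∀ w ∈ X, w = x₀ ∨ w ∈ X₂ ∨ w ∈ X₂' := by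
    intro w hw
    rw [← hpart₂] at hw
    rcases hw with (h | h) | h
    · exact Or.inl h
    · exact Or.inr (Or.inl h)
    · exact Or.inr (Or.inr h)
  -- J facts
  have hJ₁E : J₁ ⊆ N.E := fun w hw => (hJ₁ hw).1
  have hJ₂E : J₂ ⊆ N.E := fun w hw => (hJ₂ hw).1
  have hYfin : (N.E \ X).Finite := hEfin.subset Set.diff_subset
  have hYcard : (N.E \ X).ncard = 5 := by
    rw [Set.ncard_diff hXE hXfin, hE, hXcard]
  -- bases coming from the circuit/cocircuit X
  have hEfin' : N✶.E.Finite := by rw [Matroid.dual_ground]; exact hEfin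
  have hXcc' : N✶.IsCircuit' X := hXcc
  have hXdcard : ∀ e ∈ X, (X \ {e}).ncard = 6 := fun e he => by
    rw [Set.ncard_diff_singleton_of_mem he, hXcard]
  have hbaseN : ∀ e ∈ X, N.IsBase (X \ {e}) := fun e he =>
    Matroid.aux_base_of_ncard hEfin (hXc.diff_indep he) (by rw [hXdcard e he, hr])
  have hbaseD : ∀ e ∈ X, N✶.IsBase (X \ {e}) := fun e he =>
    Matroid.aux_base_of_ncard hEfin' (hXcc'.diff_indep he) (by rw [hXdcard e he, hr'])
  have hYindep : N.Indep (N.E \ X) := by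
    have hb := (hbaseD x₀ hx₀).compl_isBase_of_dual
    refine hb.indep.subset fun w hw => ?_
    exact ⟨hw.1, fun hmem => hw.2 hmem.1⟩
  -- structure of J₁, J₂ inside N.E \ X
  have hJun : J₁ ∪ J₂ = N.E \ X := by
    have hsub : J₁ ∪ J₂ ⊆ N.E \ X := union_subset hJ₁ hJ₂
    refine Set.eq_of_subset_of_ncard_le hsub ?_ hYfin
    by_contra hlt
    push_neg at hlt
    rw [hYcard] at hlt
    have h4 : (J₁ ∪ J₂).ncard ≤ 4 := by omega
    apply hJne
    have he1 : J₁ = J₁ ∪ J₂ :=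
      Set.eq_of_subset_of_ncard_le subset_union_left (hJ₁card ▸ h4) (hYfin.subset hsub)
    have h2sub : J₂ ⊆ J₁ := by rw [he1]; exact subset_union_right
    exact (Set.eq_of_subset_of_ncard_le h2sub (le_of_eq (hJ₁card.trans hJ₂card.symm))
      (hYfin.subset hJ₁)).symm
  have hJifin : (J₁ ∩ J₂).Finite := hYfin.subset fun w hw => hJ₁ hw.1
  have hJicard : (J₁ ∩ J₂).ncard = 3 := by
    have h := Set.ncard_union_add_ncard_inter J₁ J₂ (hYfin.subset hJ₁) (hYfin.subset hJ₂)
    rw [hJun, hYcard, hJ₁card, hJ₂card] at h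
    omega
  have hdiff21 : J₂ \ J₁ = J₂ \ (J₁ ∩ J₂) := by
    ext w
    constructor
    · rintro ⟨h2, h1⟩; exact ⟨h2, fun hi => h1 hi.1⟩
    · rintro ⟨h2, hi⟩; exact ⟨h2, fun h1 => hi ⟨h1, h2⟩⟩
  have hdiff12 : J₁ \ J₂ = J₁ \ (J₁ ∩ J₂) := by
    ext w
    constructor
    · rintro ⟨h1, h2⟩; exact ⟨h1, fun hi => h2 hi.2⟩
    · rintro ⟨h1, hi⟩; exact ⟨h1, fun h2 => hi ⟨h1, h2⟩⟩
  obtain ⟨y₁, hy₁⟩ : ∃ y, J₂ \ J₁ = {y} := by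
    apply Set.ncard_eq_one.mp
    rw [hdiff21, Set.ncard_diff inter_subset_right hJifin, hJ₂card, hJicard]
  obtain ⟨y₂, hy₂⟩ : ∃ y, J₁ \ J₂ = {y} := by
    apply Set.ncard_eq_one.mp
    rw [hdiff12, Set.ncard_diff inter_subset_left hJifin, hJ₁card, hJicard]
  have hy₁m : y₁ ∈ J₂ \ J₁ := by rw [hy₁]; exact Set.mem_singleton _
  have hy₂m : y₂ ∈ J₁ \ J₂ := by rw [hy₂]; exact Set.mem_singleton _
  have hy₁J₂ : y₁ ∈ J₂ := hy₁m.1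
  have hy₁nJ₁ : y₁ ∉ J₁ := hy₁m.2
  have hy₂J₁ : y₂ ∈ J₁ := hy₂m.1
  have hy₂nJ₂ : y₂ ∉ J₂ := hy₂m.2
  have hy₁E : y₁ ∈ N.E := (hJ₂ hy₁J₂).1
  have hy₂E : y₂ ∈ N.E := (hJ₁ hy₂J₁).1
  have hy₁nX : y₁ ∉ X := (hJ₂ hy₁J₂).2
  have hy₂nX : y₂ ∉ X := (hJ₁ hy₂J₁).2
  -- complement identities
  have hcomp₁ : ∀ Z, Z ⊆ X → N.E \ (J₁ ∪ Z) = insert y₁ (X \ Z) := by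
    intro Z hZ
    ext w
    constructor
    · rintro ⟨hwE, hw⟩
      by_cases hwX : w ∈ X
      · exact Or.inr ⟨hwX, fun hwZ => hw (Or.inr hwZ)⟩
      · have hwY : w ∈ J₁ ∪ J₂ := by rw [hJun]; exact ⟨hwE, hwX⟩
        rcases hwY with h | h
        · exact absurd (Or.inl h) hw
        · have hmem : w ∈ J₂ \ J₁ := ⟨h, fun h1 => hw (Or.inl h1)⟩
          rw [hy₁] at hmem
          exact Or.inl hmem
    · rintro (rfl | ⟨hwX, hwZ⟩)
      · exact ⟨hy₁E, fun hmem => by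
          rcases hmem with h | h
          exacts [hy₁nJ₁ h, hy₁nX (hZ h)]⟩
      · exact ⟨hXE hwX, fun hmem => by
          rcases hmem with h | h
          exacts [(hJ₁ h).2 hwX, hwZ h]⟩
  have hcomp₂ : ∀ Z, Z ⊆ X → N.E \ (J₂ ∪ Z) = insert y₂ (X \ Z) := by
    intro Z hZ
    ext w
    constructor
    · rintro ⟨hwE, hw⟩
      by_cases hwX : w ∈ X
      · exact Or.inr ⟨hwX, fun hwZ => hw (Or.inr hwZ)⟩
      · have hwY : w ∈ J₁ ∪ J₂ := by rw [hJun]; exact ⟨hwE, hwX⟩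
        rcases hwY with h | h
        · have hmem : w ∈ J₁ \ J₂ := ⟨h, fun h1 => hw (Or.inl h1)⟩
          rw [hy₂] at hmem
          exact Or.inl hmem
        · exact absurd (Or.inl h) hw
    · rintro (rfl | ⟨hwX, hwZ⟩)
      · exact ⟨hy₂E, fun hmem => by
          rcases hmem with h | h
          exacts [hy₂nJ₂ h, hy₂nX (hZ h)]⟩
      · exact ⟨hXE hwX, fun hmem => by
          rcases hmem with h | h
          exacts [(hJ₂ h).2 hwX, hwZ h]⟩
  -- X-diff identities
  have hXd₁ : X \ X₁ = insert x₀ X₁' := by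
    ext w
    constructor
    · rintro ⟨hwX, hw1⟩
      rcases hXsplit₁ w hwX with rfl | h | h
      · exact Or.inl rfl
      · exact absurd h hw1
      · exact Or.inr h
    · rintro (rfl | h)
      · exact ⟨hx₀, hx₀X₁⟩
      · exact ⟨hX₁'X h, fun h1 => hd11 w h1 h⟩
  have hXd₁' : X \ X₁' = insert x₀ X₁ := by
    ext w
    constructor
    · rintro ⟨hwX, hw1⟩
      rcases hXsplit₁ w hwX with rfl | h | h
      · exact Or.inl rfl
      · exact Or.inr h
      · exact absurd h hw1
    · rintro (rfl | h)
      · exact ⟨hx₀, hx₀X₁'⟩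
      · exact ⟨hX₁X h, hd11 w h⟩
  -- distinctness of y₁, y₂, x₀
  have hy₁y₂ : y₁ ≠ y₂ := fun h => hy₁nJ₁ (h ▸ hy₂J₁)
  have hy₁x₀ : y₁ ≠ x₀ := fun h => hy₁nX (h ▸ hx₀)
  have hy₂x₀ : y₂ ≠ x₀ := fun h => hy₂nX (h ▸ hx₀)
  have hTsub : ({y₁, y₂, x₀} : Set α) ⊆ N.E := by
    rintro w (rfl | rfl | rfl)
    exacts [hy₁E, hy₂E, hx₀E]
  have hTcard : ({y₁, y₂, x₀} : Set α).ncard = 3 := by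
    have f1 : ({x₀} : Set α).Finite := Set.finite_singleton _
    rw [Set.ncard_insert_of_notMem (by rintro (rfl | rfl); exacts [hy₁y₂ rfl, hy₁x₀ rfl])
        (f1.insert y₂),
      Set.ncard_insert_of_notMem (by rintro rfl; exact hy₂x₀ rfl) f1, Set.ncard_singleton]
  have hTindepD : N✶.Indep {y₁, y₂, x₀} := by
    have hsub : X \ {x₀} ⊆ N.E \ {y₁, y₂, x₀} := by
      rintro w ⟨hwX, hwx⟩
      refine ⟨hXE hwX, ?_⟩
      rintro (rfl | rfl | rfl)
      exacts [hy₁nX hwX, hy₂nX hwX, hwx rfl]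
    have hsp : N.Spanning (N.E \ {y₁, y₂, x₀}) :=
      (hbaseN x₀ hx₀).spanning.superset hsub Set.diff_subset
    exact ((Matroid.coindep_iff_compl_spanning hTsub).mpr hsp).indep
  -- the key counting device
  have hbasisBound : ∀ A₀ : Set α, A₀ ⊆ N.E → A₀.ncard = 4 →
      ({y₁, y₂, x₀} : Set α) ⊆ N✶.closure A₀ →
      ∃ J, N✶.IsBasis J (A₀ ∪ {y₁, y₂, x₀}) ∧ ({y₁, y₂, x₀} : Set α) ⊆ J ∧ J.ncard ≤ 4 := by
    intro A₀ hA₀E hA₀c hTcl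
    have hA₀E' : A₀ ⊆ N✶.E := hA₀E
    have hUE : A₀ ∪ {y₁, y₂, x₀} ⊆ N✶.E := union_subset hA₀E' hTsub
    obtain ⟨K, hK⟩ := N✶.exists_isBasis A₀ hA₀E'
    have hKbasis : N✶.IsBasis K (A₀ ∪ {y₁, y₂, x₀}) := by
      refine hK.indep.isBasis_of_subset_of_subset_closure (hK.subset.trans subset_union_left) ?_
      rw [hK.closure_eq_closure]
      exact union_subset (N✶.subset_closure A₀ hA₀E') hTcl
    obtain ⟨J, hJb, hTJ⟩ := hTindepD.subset_isBasis_of_subset subset_union_right hUE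
    refine ⟨J, hJb, hTJ, ?_⟩
    have hJK : J.ncard = K.ncard := by
      rw [Set.ncard_def, hJb.encard_eq_encard hKbasis, ← Set.ncard_def]
    rw [hJK, ← hA₀c]
    exact Set.ncard_le_ncard hK.subset (hEfin.subset hA₀E)
  -- the main contradiction for part 1
  have key : N.IsHyperplane (J₂ ∪ X₁) → N.IsHyperplane (J₂ ∪ X₁') → False := by
    intro hb2 hc2
    have hA₀E : insert x₀ X₁' ⊆ N.E := insert_subset hx₀E (hX₁'X.trans hXE)
    have hB₀E : insert x₀ X₁ ⊆ N.E := insert_subset hx₀E (hX₁X.trans hXE)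
    have hget : ∀ (G W : Set α) (y : α), N.IsHyperplane G →
        N.E \ G = insert y W → y ∉ W → y ∈ N✶.closure W := by
      intro G W y hyp hcompl hynW
      have hymem : y ∈ N.E \ G := by rw [hcompl]; exact mem_insert _ _
      have h := hyp.mem_dual_closure hymem
      rwa [hcompl, Set.insert_diff_self_of_notMem hynW] at h
    have hy₁nAx : y₁ ∉ insert x₀ X₁' := by
      rintro (rfl | h)
      exacts [hy₁nX hx₀, hy₁nX (hX₁'X h)]
    have hy₂nAx : y₂ ∉ insert x₀ X₁' := by
      rintro (rfl | h)
      exacts [hy₂nX hx₀, hy₂nX (hX₁'X h)]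
    have hy₁nBx : y₁ ∉ insert x₀ X₁ := by
      rintro (rfl | h)
      exacts [hy₁nX hx₀, hy₁nX (hX₁X h)]
    have hy₂nBx : y₂ ∉ insert x₀ X₁ := by
      rintro (rfl | h)
      exacts [hy₂nX hx₀, hy₂nX (hX₁X h)]
    have hy₁A := hget _ _ _ hH₁b (by rw [hcomp₁ X₁ hX₁X, hXd₁]) hy₁nAx
    have hy₂A := hget _ _ _ hb2 (by rw [hcomp₂ X₁ hX₁X, hXd₁]) hy₂nAx
    have hy₁B := hget _ _ _ hH₁c (by rw [hcomp₁ X₁' hX₁'X, hXd₁']) hy₁nBx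
    have hy₂B := hget _ _ _ hc2 (by rw [hcomp₂ X₁' hX₁'X, hXd₁']) hy₂nBx
    have hTA : ({y₁, y₂, x₀} : Set α) ⊆ N✶.closure (insert x₀ X₁') := by
      rintro w (rfl | rfl | rfl)
      exacts [hy₁A, hy₂A, N✶.subset_closure _ hA₀E (mem_insert _ _)]
    have hTB : ({y₁, y₂, x₀} : Set α) ⊆ N✶.closure (insert x₀ X₁) := by
      rintro w (rfl | rfl | rfl)
      exacts [hy₁B, hy₂B, N✶.subset_closure _ hB₀E (mem_insert _ _)]
    have hA₀c : (insert x₀ X₁').ncard = 4 := by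
      rw [Set.ncard_insert_of_notMem hx₀X₁' (hEfin.subset (hX₁'X.trans hXE)), hc₁.2]
    have hB₀c : (insert x₀ X₁).ncard = 4 := by
      rw [Set.ncard_insert_of_notMem hx₀X₁ (hEfin.subset (hX₁X.trans hXE)), hc₁.1]
    obtain ⟨JA, hJAb, hTJA, hJAc⟩ := hbasisBound _ hA₀E hA₀c hTA
    obtain ⟨JB, hJBb, hTJB, hJBc⟩ := hbasisBound _ hB₀E hB₀c hTB
    have hJAE : JA ⊆ N.E := hJAb.indep.subset_ground
    have hJBE : JB ⊆ N.E := hJBb.indep.subset_ground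
    have hXsubcl : X ⊆ N✶.closure (JA ∪ JB) := by
      intro w hwX
      rcases hXsplit₁ w hwX with rfl | h | h
      · exact N✶.closure_subset_closure subset_union_left
          (hJAb.subset_closure (Or.inl (mem_insert _ _)))
      · exact N✶.closure_subset_closure subset_union_right
          (hJBb.subset_closure (Or.inl (Or.inr h)))
      · exact N✶.closure_subset_closure subset_union_left
          (hJAb.subset_closure (Or.inl (Or.inr h)))
    have hclU : N✶.closure (JA ∪ JB) = N✶.E := by
      apply subset_antisymm (N✶.closure_subset_ground _)
      have h1 : N✶.closure X ⊆ N✶.closure (JA ∪ JB) :=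
        Matroid.closure_subset_closure_of_subset_closure hXsubcl
      rw [← (hbaseD x₀ hx₀).closure_eq]
      exact (N✶.closure_subset_closure Set.diff_subset).trans h1
    have hUsp : N✶.Spanning (JA ∪ JB) := ⟨hclU, union_subset hJAE hJBE⟩
    obtain ⟨Bs, hBs, hBsU⟩ := hUsp.exists_isBase_subset
    have hBscard : Bs.ncard = 6 := by
      rw [hBs.ncard_eq_ncard_of_isBase (hbaseD x₀ hx₀), hXdcard x₀ hx₀]
    have hJAfin : JA.Finite := hEfin.subset hJAE
    have hJBfin : JB.Finite := hEfin.subset hJBE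
    have h3le : 3 ≤ (JA ∩ JB).ncard := by
      rw [← hTcard]
      exact Set.ncard_le_ncard (subset_inter hTJA hTJB) (hJAfin.subset inter_subset_left)
    have hsum := Set.ncard_union_add_ncard_inter JA JB hJAfin hJBfin
    have h6le : 6 ≤ (JA ∪ JB).ncard := by
      rw [← hBscard]
      exact Set.ncard_le_ncard hBsU (hJAfin.union hJBfin)
    omega
  constructor
  · rintro (⟨h2, h2'⟩ | ⟨h2, h2'⟩)
    · rw [← h2] at hH₂b
      rw [← h2'] at hH₂c
      exact key hH₂b hH₂c
    · rw [← h2] at hH₂c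
      rw [← h2'] at hH₂b
      exact key hH₂c hH₂b
  · rintro ⟨hc2a, hc2b⟩
    obtain ⟨a, ha⟩ := Set.ncard_eq_one.mp hc2b
    have ham : a ∈ X₁ ∩ X₂' := by rw [ha]; exact Set.mem_singleton _
    have haX₁ : a ∈ X₁ := ham.1
    have haX₂' : a ∈ X₂' := ham.2
    have haX : a ∈ X := hX₁X haX₁
    have haE : a ∈ N.E := hXE haX
    have hanX₂ : a ∉ X₂ := fun h => hd22 a h haX₂'
    have hX₂split : X₂ = (X₂ ∩ X₁) ∪ (X₂ ∩ X₁') := by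
      ext w
      constructor
      · intro hw
        rcases hXsplit₁ w (hX₂X hw) with rfl | h | h
        · exact absurd hw hx₀X₂
        · exact Or.inl ⟨hw, h⟩
        · exact Or.inr ⟨hw, h⟩
      · rintro (h | h)
        exacts [h.1, h.1]
    have hbcard : (X₂ ∩ X₁').ncard = 1 := by
      have hdisj : Disjoint (X₂ ∩ X₁) (X₂ ∩ X₁') := by
        rw [Set.disjoint_left]
        rintro w ⟨-, h1⟩ ⟨-, h1'⟩
        exact hd11 w h1 h1'
      have hfin1 : (X₂ ∩ X₁).Finite := hXfin.subset fun w hw => hX₂X hw.1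
      have hfin2 : (X₂ ∩ X₁').Finite := hXfin.subset fun w hw => hX₂X hw.1
      have hu := Set.ncard_union_eq hdisj hfin1 hfin2
      rw [← hX₂split] at hu
      have hi : (X₂ ∩ X₁).ncard = 2 := by rw [Set.inter_comm]; exact hc2a
      rw [hc₂.1, hi] at hu
      omega
    obtain ⟨b, hb⟩ := Set.ncard_eq_one.mp hbcard
    have hbm : b ∈ X₂ ∩ X₁' := by rw [hb]; exact Set.mem_singleton _
    have hbX₂ : b ∈ X₂ := hbm.1
    have hbX₁' : b ∈ X₁' := hbm.2
    have hbX : b ∈ X := hX₂X hbX₂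
    have hbE : b ∈ N.E := hXE hbX
    have hbnX₁ : b ∉ X₁ := fun h => hd11 b h hbX₁'
    have hbnX₂' : b ∉ X₂' := hd22 b hbX₂
    have hba : b ≠ a := fun h => hbnX₁ (h ▸ haX₁)
    -- independence chain
    have hJJE : J₁ ∩ J₂ ⊆ N.E := fun w hw => hJ₁E hw.1
    have hJJindep : N.Indep (J₁ ∩ J₂) := hYindep.subset fun w hw => hJ₁ hw.1
    have hJJX : ∀ w ∈ J₁ ∩ J₂, w ∉ X := fun w hw => (hJ₁ hw.1).2
    have hclJJ : N.closure (J₁ ∩ J₂) ⊆ insert x₀ (J₁ ∩ J₂) := by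
      intro w hw
      have h1 : w ∈ J₁ ∪ {x₀} := by
        have h := N.closure_subset_closure
          (show J₁ ∩ J₂ ⊆ J₁ ∪ {x₀} from fun v hv => Or.inl hv.1) hw
        rwa [hH₁a.1.closure] at h
      have h2 : w ∈ J₂ ∪ {x₀} := by
        have h := N.closure_subset_closure
          (show J₁ ∩ J₂ ⊆ J₂ ∪ {x₀} from fun v hv => Or.inl hv.2) hw
        rwa [hH₂a.1.closure] at h
      rcases h1 with h1 | h1
      · rcases h2 with h2 | h2
        · exact Or.inr ⟨h1, h2⟩
        · exact Or.inl h2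
      · exact Or.inl h1
    have hanJJ : a ∉ J₁ ∩ J₂ := fun h => hJJX a h haX
    have hT4indep : N.Indep (insert a (J₁ ∩ J₂)) := by
      rw [hJJindep.insert_indep_iff_of_notMem hanJJ]
      refine ⟨haE, fun h => ?_⟩
      rcases hclJJ h with h' | h'
      · exact hx₀X₁ (h' ▸ haX₁)
      · exact hJJX a h' haX
    have hclT4 : N.closure (insert a (J₁ ∩ J₂)) ⊆ insert a (J₁ ∩ J₂) := by
      intro w hw
      have h1 : w ∈ J₁ ∪ X₁ := by
        have h := N.closure_subset_closure (show insert a (J₁ ∩ J₂) ⊆ J₁ ∪ X₁ from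
          insert_subset (Or.inr haX₁) fun v hv => Or.inl hv.1) hw
        rwa [hH₁b.1.closure] at h
      have h2 : w ∈ J₂ ∪ X₂' := by
        have h := N.closure_subset_closure (show insert a (J₁ ∩ J₂) ⊆ J₂ ∪ X₂' from
          insert_subset (Or.inr haX₂') fun v hv => Or.inl hv.2) hw
        rwa [hH₂c.1.closure] at h
      rcases h1 with h1 | h1 <;> rcases h2 with h2 | h2
      · exact Or.inr ⟨h1, h2⟩
      · exact absurd (hX₂'X h2) (hJ₁ h1).2
      · exact absurd (hX₁X h1) (hJ₂ h2).2
      · have hmem : w ∈ X₁ ∩ X₂' := ⟨h1, h2⟩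
        rw [ha] at hmem
        exact Or.inl hmem
    have hbnT4 : b ∉ insert a (J₁ ∩ J₂) := by
      rintro (rfl | h)
      exacts [hba rfl, hJJX b h hbX]
    have hSindep : N.Indep (insert b (insert a (J₁ ∩ J₂))) := by
      rw [hT4indep.insert_indep_iff_of_notMem hbnT4]
      exact ⟨hbE, fun h => hbnT4 (hclT4 h)⟩
    have hSsub : insert b (insert a (J₁ ∩ J₂)) ⊆ N.E :=
      insert_subset hbE (insert_subset haE hJJE)
    have hSF : insert b (insert a (J₁ ∩ J₂)) ⊆ N.closure (insert b (insert a (J₁ ∩ J₂))) :=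
      N.subset_closure _ hSsub
    have hFsub : N.closure (insert b (insert a (J₁ ∩ J₂))) ⊆
        insert x₀ (insert b (insert a (J₁ ∩ J₂))) := by
      intro z hzF
      by_contra hzn
      have hzE : z ∈ N.E := N.closure_subset_ground _ hzF
      have hzT4 : z ∉ N.closure (insert a (J₁ ∩ J₂)) := fun h =>
        hzn (((subset_insert _ _).trans (subset_insert _ _)) (hclT4 h))
      have hexch := Matroid.closure_exchange (M := N) (e := z) (f := b)
        (X := insert a (J₁ ∩ J₂)) ⟨hzF, hzT4⟩
      have hbmem : b ∈ N.closure (insert z (insert a (J₁ ∩ J₂))) := hexch.1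
      have hfinal : ∀ G : Set α, N.IsHyperplane G →
          insert z (insert a (J₁ ∩ J₂)) ⊆ G → b ∉ G → False := by
        intro G hG hsubG hbG
        have h := N.closure_subset_closure hsubG hbmem
        rw [hG.1.closure] at h
        exact hbG h
      by_cases hzX : z ∈ X
      · rcases hXsplit₁ z hzX with rfl | h1 | h1'
        · exact hzn (mem_insert _ _)
        · refine hfinal _ hH₁b (insert_subset (Or.inr h1)
            (insert_subset (Or.inr haX₁) fun v hv => Or.inl hv.1)) ?_
          rintro (h | h)
          exacts [(hJ₁ h).2 hbX, hbnX₁ h]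
        · rcases hXsplit₂ z hzX with rfl | h2 | h2'
          · exact hzn (mem_insert _ _)
          · have hmem : z ∈ X₂ ∩ X₁' := ⟨h2, h1'⟩
            rw [hb] at hmem
            exact hzn (Or.inr (Or.inl hmem))
          · refine hfinal _ hH₂c (insert_subset (Or.inr h2')
              (insert_subset (Or.inr haX₂') fun v hv => Or.inl hv.2)) ?_
            rintro (h | h)
            exacts [(hJ₂ h).2 hbX, hbnX₂' h]
      · have hzY : z ∈ J₁ ∪ J₂ := by rw [hJun]; exact ⟨hzE, hzX⟩
        rcases hzY with h | h
        · refine hfinal _ hH₁b (insert_subset (Or.inl h)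
            (insert_subset (Or.inr haX₁) fun v hv => Or.inl hv.1)) ?_
          rintro (hh | hh)
          exacts [(hJ₁ hh).2 hbX, hbnX₁ hh]
        · refine hfinal _ hH₂c (insert_subset (Or.inl h)
            (insert_subset (Or.inr haX₂') fun v hv => Or.inl hv.2)) ?_
          rintro (hh | hh)
          exacts [(hJ₂ hh).2 hbX, hbnX₂' hh]
    have hy₁nF : y₁ ∉ N.closure (insert b (insert a (J₁ ∩ J₂))) := by
      intro h
      rcases hFsub h with h' | h' | h' | h'
      · exact hy₁x₀ h'
      · exact hy₁nX (by rw [h']; exact hbX)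
      · exact hy₁nX (by rw [h']; exact haX)
      · exact hy₁nJ₁ h'.1
    have hFhyp : N.IsHyperplane (N.closure (insert b (insert a (J₁ ∩ J₂)))) := by
      refine ⟨Matroid.aux_flat_closure N _, ?_, ?_⟩
      · intro hFE
        exact hy₁nF (by rw [hFE]; exact hy₁E)
      · intro G hG hssub
        obtain ⟨e, heG, heF⟩ := Set.exists_of_ssubset hssub
        have heE : e ∈ N.E := hG.subset_ground heG
        have heS : e ∉ insert b (insert a (J₁ ∩ J₂)) := fun h => heF (hSF h)
        have heind : N.Indep (insert e (insert b (insert a (J₁ ∩ J₂)))) := by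
          rw [hSindep.insert_indep_iff_of_notMem heS]
          exact ⟨heE, heF⟩
        have hecard : (insert e (insert b (insert a (J₁ ∩ J₂)))).ncard = 6 := by
          rw [Set.ncard_insert_of_notMem heS (hEfin.subset hSsub),
            Set.ncard_insert_of_notMem hbnT4 (hEfin.subset (insert_subset haE hJJE)),
            Set.ncard_insert_of_notMem hanJJ hJifin, hJicard]
        have hbase6 := Matroid.aux_base_of_ncard hEfin heind (by rw [hecard, hr])
        apply subset_antisymm hG.subset_ground
        calc N.E = N.closure (insert e (insert b (insert a (J₁ ∩ J₂)))) :=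
              hbase6.closure_eq.symm
          _ ⊆ N.closure G := N.closure_subset_closure
              (insert_subset heG (hSF.trans hssub.subset))
          _ = G := hG.closure
    have hX₁dX₂ : X₁ \ X₂ = {a} := by
      ext w
      constructor
      · rintro ⟨h1, h2⟩
        rcases hXsplit₂ w (hX₁X h1) with rfl | h | h
        · exact absurd h1 hx₀X₁
        · exact absurd h h2
        · have hmem : w ∈ X₁ ∩ X₂' := ⟨h1, h⟩
          rw [ha] at hmem
          exact hmem
      · rintro rfl
        exact ⟨haX₁, hanX₂⟩
    have hX₂dX₁ : X₂ \ X₁ = {b} := by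
      ext w
      constructor
      · rintro ⟨h2, h1⟩
        rcases hXsplit₁ w (hX₂X h2) with rfl | h | h
        · exact absurd h2 hx₀X₂
        · exact absurd h h1
        · have hmem : w ∈ X₂ ∩ X₁' := ⟨h2, h⟩
          rw [hb] at hmem
          exact hmem
      · rintro rfl
        exact ⟨hbX₂, hbnX₁⟩
    have htarget : (J₁ ∩ J₂) ∪ ((X₁ \ X₂) ∪ (X₂ \ X₁)) = insert b (insert a (J₁ ∩ J₂)) := by
      rw [hX₁dX₂, hX₂dX₁]
      ext w
      constructor
      · rintro (h | rfl | rfl)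
        exacts [Or.inr (Or.inr h), Or.inr (Or.inl rfl), Or.inl rfl]
      · rintro (rfl | rfl | h)
        exacts [Or.inr (Or.inr rfl), Or.inr (Or.inl rfl), Or.inl h]
    by_cases hx₀F : x₀ ∈ N.closure (insert b (insert a (J₁ ∩ J₂)))
    · right
      have heq : (J₁ ∩ J₂) ∪ ((X₁ \ X₂) ∪ (X₂ \ X₁)) ∪ {x₀} =
          N.closure (insert b (insert a (J₁ ∩ J₂))) := by
        rw [htarget, Set.union_singleton]
        exact (insert_subset hx₀F hSF).antisymm hFsub
      rw [heq]
      exact hFhyp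
    · left
      have heq : (J₁ ∩ J₂) ∪ ((X₁ \ X₂) ∪ (X₂ \ X₁)) =
          N.closure (insert b (insert a (J₁ ∩ J₂))) := by
        rw [htarget]
        refine hSF.antisymm fun w hw => ?_
        rcases hFsub hw with h | h
        · exact absurd (h ▸ hw) hx₀F
        · exact h
      rw [heq]
      exact hFhyp
end
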